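/- arXiv:1004.2660 — 4 statements merged into one kernel-verified Lean document; each statement's English description precedes it below -/
import Mathlib

section
/- Let p be a prime and ρ : ℤ/p → GL(n,ℤ) a group homomorphism whose action on ℤ^n is free away from 0. Then p - 1 divides n. -/
set_option maxHeartbeats 1000000
set_option synthInstance.maxHeartbeats 1000000

open Polynomial

/-- Let `p` be a prime and `ρ : ℤ/p → GL(n,ℤ)` a group homomorphism whose
action on `ℤⁿ` is free away from `0` (for every nonzero `u` and nontrivial `g`,
`ρ(g)u ≠ u`).  Then `p - 1` divides `n`. -/
theorem stmt1 (p n : ℕ) (hp : p.Prime)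
    (ρ : Multiplicative (ZMod p) →* ((Fin n → ℤ) ≃ₗ[ℤ] (Fin n → ℤ)))
    (hfree : ∀ g : Multiplicative (ZMod p), g ≠ 1 →
      ∀ u : Fin n → ℤ, u ≠ 0 → ρ g u ≠ u) :
    (p - 1) ∣ n := by
  classical
  haveI : Fact p.Prime := ⟨hp⟩
  set g : Multiplicative (ZMod p) := Multiplicative.ofAdd 1 with hgdef
  have hg1 : g ≠ 1 := by
    simp only [hgdef, ne_eq, ← ofAdd_zero]
    intro h
    exact one_ne_zero (Multiplicative.ofAdd.injective h)
  set E : (Fin n → ℤ) ≃ₗ[ℤ] (Fin n → ℤ) := ρ g with hEdef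
  set M : Matrix (Fin n) (Fin n) ℤ := LinearMap.toMatrixAlgEquiv' E.toLinearMap with hMdef
  have hMv : ∀ v, M.mulVec v = E v := by
    intro v
    rw [← Matrix.toLinAlgEquiv'_apply, hMdef, Matrix.toLinAlgEquiv'_toMatrixAlgEquiv']
    rfl
  -- M ^ p = 1
  have hgp : g ^ p = 1 := by
    have : (p : ZMod p) = 0 := ZMod.natCast_self p
    rw [hgdef, ← ofAdd_nsmul, nsmul_eq_mul, mul_one, this, ofAdd_zero]
  have hEp : E.toLinearMap ^ p = 1 := by
    have h1 : E.toLinearMap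
        = LinearEquiv.automorphismGroup.toLinearMapMonoidHom (ρ g) := rfl
    rw [h1, ← map_pow, ← map_pow, hgp, map_one, map_one]
  have hMp : M ^ p = 1 := by
    rw [hMdef, ← map_pow, hEp, map_one]
  -- determinant of M - 1 is nonzero
  have hdet : (M - 1).det ≠ 0 := by
    intro h
    obtain ⟨v, hv0, hv⟩ := Matrix.exists_mulVec_eq_zero_iff.2 h
    rw [Matrix.sub_mulVec, Matrix.one_mulVec, sub_eq_zero, hMv] at hv
    exact hfree g hg1 v hv0 hv
  -- pass to ℚ
  set ι : Matrix (Fin n) (Fin n) ℤ →+* Matrix (Fin n) (Fin n) ℚ :=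
    (Int.castRingHom ℚ).mapMatrix with hιdef
  set Mq : Matrix (Fin n) (Fin n) ℚ := ι M with hMqdef
  have hMqp : Mq ^ p = 1 := by rw [hMqdef, ← map_pow, hMp, map_one]
  have hdetq : (Mq - 1).det ≠ 0 := by
    have h1 : Mq - 1 = ι (M - 1) := by rw [map_sub, map_one]
    rw [h1, hιdef, ← RingHom.map_det]
    intro h
    exact hdet (by simpa using h)
  have hunit : IsUnit (Mq - 1) := by
    rw [Matrix.isUnit_iff_isUnit_det]
    exact isUnit_iff_ne_zero.2 hdetq
  -- cyclotomic polynomial kills Mq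
  set Φ : ℚ[X] := cyclotomic p ℚ with hΦdef
  have hirr : Irreducible Φ := cyclotomic.irreducible_rat hp.pos
  have haevalΦ : aeval Mq Φ = 0 := by
    have hmul : aeval Mq Φ * (Mq - 1) = 0 := by
      have h1 : Φ * (X - 1) = X ^ p - 1 := cyclotomic_prime_mul_X_sub_one ℚ p
      have h2 : aeval Mq (Φ * (X - 1)) = aeval Mq Φ * (Mq - 1) := by
        rw [map_mul, map_sub, aeval_X, map_one]
      rw [← h2, h1, map_sub, map_pow, aeval_X, map_one, hMqp, sub_self]
    exact (hunit.mul_left_eq_zero).1 hmul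
  -- the endomorphism
  set V := Fin n → ℚ
  set f : Module.End ℚ V := Matrix.toLinAlgEquiv' Mq with hfdef
  have haevalf : aeval f Φ = 0 := by
    rw [hfdef, ← AlgEquiv.coe_algHom, Polynomial.aeval_algHom_apply, haevalΦ, map_zero]
  -- V is a vector space over K = ℚ[X]/Φ
  haveI : Fact (Irreducible Φ) := ⟨hirr⟩
  set K := AdjoinRoot Φ with hKdef
  have H : ∀ a ∈ Ideal.span {Φ}, (aeval f : ℚ[X] →ₐ[ℚ] Module.End ℚ V).toRingHom a = 0 := by
    intro a ha
    obtain ⟨b, rfl⟩ := Ideal.mem_span_singleton.mp ha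
    show aeval f (Φ * b) = 0
    rw [map_mul, haevalf, zero_mul]
  set φ : K →+* Module.End ℚ V :=
    Ideal.Quotient.lift (Ideal.span {Φ}) (aeval f : ℚ[X] →ₐ[ℚ] Module.End ℚ V).toRingHom H
    with hφdef
  letI : Module K V := Module.compHom V φ
  have hsmul : ∀ (k : K) (v : V), k • v = φ k v := fun _ _ => rfl
  haveI : IsScalarTower ℚ K V := by
    constructor
    intro c k v
    have h1 : c • k = algebraMap ℚ K c * k := Algebra.smul_def c k
    rw [hsmul, hsmul, h1, map_mul]
    have h2 : φ (algebraMap ℚ K c) = algebraMap ℚ (Module.End ℚ V) c := by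
      have h3 : algebraMap ℚ K c = AdjoinRoot.mk Φ (C c) := rfl
      rw [h3, hφdef]
      show Ideal.Quotient.lift _ _ H (Ideal.Quotient.mk _ (C c)) = _
      rw [Ideal.Quotient.lift_mk]
      show aeval f (C c) = _
      rw [aeval_C]
    rw [h2]
    simp [Module.End.mul_apply, Module.algebraMap_end_apply]
  have hrank : Module.finrank ℚ K * Module.finrank K V = Module.finrank ℚ V :=
    Module.finrank_mul_finrank ℚ K V
  have hK : Module.finrank ℚ K = p - 1 := by
    have h0 : Φ ≠ 0 := hirr.ne_zero
    rw [(AdjoinRoot.powerBasis h0).finrank]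
    show (AdjoinRoot.powerBasis h0).dim = p - 1
    rw [AdjoinRoot.powerBasis_dim, hΦdef, natDegree_cyclotomic, Nat.totient_prime hp]
  have hV : Module.finrank ℚ V = n := Module.finrank_fin_fun ℚ
  rw [hK, hV] at hrank
  exact ⟨Module.finrank K V, hrank.symm⟩
end

section
/- Let p be a prime and Γ = ℤ^n ⋊_ρ ℤ/p where the ℤ/p-action ρ on ℤ^n is free away from 0. Then the commutator subgroup [Γ,Γ] equals the image of ρ(t) − id : ℤ^n → ℤ^n (viewed as a subgroup of the normal subgroup ℤ^n ⊆ Γ), where t is a generator of ℤ/p. -/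
/-- The `ℤ/p`-action on `Multiplicative (ℤⁿ)` induced by `ρ`, packaged for forming the
semidirect product `Γ = ℤⁿ ⋊_ρ ℤ/p`. -/
def rhoMulAut {p n : ℕ}
    (ρ : Multiplicative (ZMod p) →* ((Fin n → ℤ) ≃ₗ[ℤ] (Fin n → ℤ))) :
    Multiplicative (ZMod p) →* MulAut (Multiplicative (Fin n → ℤ)) where
  toFun g := AddEquiv.toMultiplicative (ρ g).toAddEquiv
  map_one' := by
    ext x
    simp only [map_one]
    rfl
  map_mul' g h := by
    ext x
    simp only [map_mul]
    rfl

section aux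
variable {p n : ℕ} (ρ : Multiplicative (ZMod p) →* ((Fin n → ℤ) ≃ₗ[ℤ] (Fin n → ℤ)))

@[simp] lemma toAdd_rhoMulAut (g : Multiplicative (ZMod p)) (m : Multiplicative (Fin n → ℤ)) :
    Multiplicative.toAdd ((rhoMulAut ρ g) m) = ρ g (Multiplicative.toAdd m) := rfl

@[simp] lemma LinearEquivMulApply (e₁ e₂ : (Fin n → ℤ) ≃ₗ[ℤ] (Fin n → ℤ)) (v : Fin n → ℤ) :
    (e₁ * e₂) v = e₁ (e₂ v) := rfl

@[simp] lemma LinearEquivOneApply (v : Fin n → ℤ) :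
    (1 : (Fin n → ℤ) ≃ₗ[ℤ] (Fin n → ℤ)) v = v := rfl

@[simp] lemma rhoMulAut_inv (g : Multiplicative (ZMod p)) :
    ((rhoMulAut ρ) g)⁻¹ = (rhoMulAut ρ) g⁻¹ := (map_inv _ g).symm

lemma rho_comp (g h : Multiplicative (ZMod p)) (v : Fin n → ℤ) :
    ρ g (ρ h v) = ρ (g * h) v := by rw [map_mul]; rfl

@[simp] lemma rho_inv_apply (g : Multiplicative (ZMod p)) (v : Fin n → ℤ) :
    ρ g⁻¹ (ρ g v) = v := by
  rw [rho_comp, inv_mul_cancel, map_one]; rfl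

@[simp] lemma rho_inv_apply' (g : Multiplicative (ZMod p)) (v : Fin n → ℤ) :
    ρ g (ρ g⁻¹ v) = v := by
  rw [rho_comp, mul_inv_cancel, map_one]; rfl

/-- The subgroup of the semidirect product corresponding to a submodule of `ℤⁿ`. -/
def sdSub (R : Submodule ℤ (Fin n → ℤ)) :
    Subgroup (Multiplicative (Fin n → ℤ) ⋊[rhoMulAut ρ] Multiplicative (ZMod p)) where
  carrier := {x | x.right = 1 ∧ Multiplicative.toAdd x.left ∈ R}
  one_mem' := ⟨rfl, by simpa using R.zero_mem⟩
  mul_mem' := by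
    rintro a b ⟨ha1, ha2⟩ ⟨hb1, hb2⟩
    refine ⟨by simp [SemidirectProduct.mul_right, ha1, hb1], ?_⟩
    rw [SemidirectProduct.mul_left, ha1]
    simpa using R.add_mem ha2 hb2
  inv_mem' := by
    rintro a ⟨ha1, ha2⟩
    refine ⟨by simp [SemidirectProduct.inv_right, ha1], ?_⟩
    rw [SemidirectProduct.inv_left, ha1]
    simpa using R.neg_mem ha2

end aux

open scoped commutatorElement

/-- For `Γ = ℤⁿ ⋊_ρ ℤ/p` with the `ℤ/p`-action `ρ` free away from `0`, the
commutator subgroup `[Γ,Γ]` equals the image of `ρ(t) − id : ℤⁿ → ℤⁿ`, viewed inside the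
normal subgroup `ℤⁿ ⊆ Γ`, where `t` generates `ℤ/p`. -/
theorem stmt4 (p n : ℕ) (hp : p.Prime)
    (ρ : Multiplicative (ZMod p) →* ((Fin n → ℤ) ≃ₗ[ℤ] (Fin n → ℤ)))
    (hfree : ∀ g : Multiplicative (ZMod p), g ≠ 1 →
      ∀ u : Fin n → ℤ, u ≠ 0 → ρ g u ≠ u)
    (t : Multiplicative (ZMod p)) (ht : ∀ g, g ∈ Subgroup.zpowers t)
    (x : Multiplicative (Fin n → ℤ) ⋊[rhoMulAut ρ] Multiplicative (ZMod p)) :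
    x ∈ commutator (Multiplicative (Fin n → ℤ) ⋊[rhoMulAut ρ] Multiplicative (ZMod p)) ↔
      ∃ v ∈ LinearMap.range ((ρ t : (Fin n → ℤ) →ₗ[ℤ] (Fin n → ℤ)) - LinearMap.id),
        x = SemidirectProduct.inl (Multiplicative.ofAdd v) := by
  set R : Submodule ℤ (Fin n → ℤ) :=
    LinearMap.range ((ρ t : (Fin n → ℤ) →ₗ[ℤ] (Fin n → ℤ)) - LinearMap.id) with hRdef
  have hmem : ∀ u : Fin n → ℤ, ρ t u - u ∈ R := fun u => ⟨u, by simp⟩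
  -- key: for every g, v, ρ g v - v ∈ R
  have key : ∀ (g : Multiplicative (ZMod p)) (v : Fin n → ℤ), ρ g v - v ∈ R := by
    intro g v
    obtain ⟨k, rfl⟩ := ht g
    induction k using Int.induction_on generalizing v with
    | zero => simpa using R.zero_mem
    | succ k ih =>
      have e : ρ (t ^ ((k : ℤ) + 1)) v - v
          = (ρ (t ^ (k : ℤ)) (ρ t v) - ρ t v) + (ρ t v - v) := by
        rw [zpow_add_one, map_mul, LinearEquivMulApply]
        abel
      rw [e]
      exact R.add_mem (ih _) (hmem v)
    | pred k ih =>
      have h2 : ρ t⁻¹ v - v ∈ R := by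
        refine ⟨-(ρ t⁻¹ v), ?_⟩
        simp only [LinearMap.sub_apply, LinearMap.id_apply, LinearEquiv.coe_coe, map_neg,
          rho_inv_apply']
        abel
      have hexp : (-(k : ℤ) - 1) = -(k : ℤ) + -1 := by ring
      have e : ρ (t ^ (-(k : ℤ) - 1)) v - v
          = (ρ (t ^ (-(k : ℤ))) (ρ t⁻¹ v) - ρ t⁻¹ v) + (ρ t⁻¹ v - v) := by
        rw [hexp, zpow_add, zpow_neg_one, map_mul, LinearEquivMulApply]
        abel
      rw [e]
      exact R.add_mem (ih _) h2
  have hconj : ∀ s u : Multiplicative (ZMod p), s * (u * s⁻¹) = u := fun s u => by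
    rw [mul_comm u, ← mul_assoc, mul_inv_cancel, one_mul]
  have hconj2 : ∀ s u : Multiplicative (ZMod p), s * (u * (s⁻¹ * u⁻¹)) = 1 := fun s u => by
    rw [← mul_assoc, mul_mul_mul_comm, mul_inv_cancel, mul_inv_cancel, one_mul]
  have hcomm : commutator _ ≤ sdSub ρ R := by
    rw [commutator_def, Subgroup.commutator_le]
    rintro a - b -
    constructor
    · show (⁅a, b⁆).right = 1
      simp only [commutatorElement_def, SemidirectProduct.mul_right,
        SemidirectProduct.inv_right]
      rw [mul_comm a.right b.right]
      group
    · show Multiplicative.toAdd (⁅a, b⁆).left ∈ R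
      simp only [commutatorElement_def, SemidirectProduct.mul_left, SemidirectProduct.inv_left,
        SemidirectProduct.mul_right, SemidirectProduct.inv_right, toAdd_mul, toAdd_rhoMulAut,
        toAdd_inv, map_mul, LinearEquivMulApply, map_neg, rhoMulAut_inv, MulAut.mul_apply]
      simp only [rho_comp, hconj, hconj2, mul_inv_cancel, map_one, LinearEquivOneApply]
      have e : Multiplicative.toAdd a.left + ρ a.right (Multiplicative.toAdd b.left) +
            -(ρ b.right) (Multiplicative.toAdd a.left) + -Multiplicative.toAdd b.left
          = (ρ a.right (Multiplicative.toAdd b.left) - Multiplicative.toAdd b.left)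
            - (ρ b.right (Multiplicative.toAdd a.left) - Multiplicative.toAdd a.left) := by
        abel
      rw [e]
      exact R.sub_mem (key _ _) (key _ _)
  constructor
  · intro hx
    obtain ⟨h1, h2⟩ := hcomm hx
    refine ⟨Multiplicative.toAdd x.left, h2, ?_⟩
    rw [← SemidirectProduct.inl_left_mul_inr_right x, h1]
    simp
  · rintro ⟨v, hv, rfl⟩
    obtain ⟨u, hu⟩ := hv
    have e1 : (SemidirectProduct.inl ((rhoMulAut ρ) t (Multiplicative.ofAdd u)
          * (Multiplicative.ofAdd u)⁻¹) :
          Multiplicative (Fin n → ℤ) ⋊[rhoMulAut ρ] Multiplicative (ZMod p))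
        = ⁅(SemidirectProduct.inr t :
            Multiplicative (Fin n → ℤ) ⋊[rhoMulAut ρ] Multiplicative (ZMod p)),
          SemidirectProduct.inl (Multiplicative.ofAdd u)⁆ := by
      rw [commutatorElement_def, map_mul, SemidirectProduct.inl_aut, map_inv, map_inv,
        mul_assoc]
    have e2 : Multiplicative.ofAdd v
        = (rhoMulAut ρ) t (Multiplicative.ofAdd u) * (Multiplicative.ofAdd u)⁻¹ := by
      apply Multiplicative.toAdd.injective
      simp only [toAdd_mul, toAdd_rhoMulAut, toAdd_inv, toAdd_ofAdd, ← hu]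
      simp [sub_eq_add_neg]
    rw [e2, e1]
    exact Subgroup.commutator_mem_commutator (Subgroup.mem_top _) (Subgroup.mem_top _)
end

section
/- Let p be a prime, Γ = ℤ^n ⋊_ρ ℤ/p with ρ free away from 0, and let s ∈ Γ be an element of order p. Then the map sending the class of u ∈ ℤ^n in coker(ρ(t) − id) to the conjugacy class of the cyclic subgroup generated by u·s is a bijection from coker(ρ(t) − id : ℤ^n → ℤ^n) onto the set of conjugacy classes of nontrivial finite subgroups of Γ. -/
section Aux

variable {p n : ℕ} (ρ : Multiplicative (ZMod p) →* ((Fin n → ℤ) ≃ₗ[ℤ] (Fin n → ℤ)))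

lemma rhoMulAut_apply (g : Multiplicative (ZMod p)) (x : Multiplicative (Fin n → ℤ)) :
    (rhoMulAut ρ g) x = Multiplicative.ofAdd (ρ g x.toAdd) := rfl

lemma aux_pow_mem (h : Multiplicative (ZMod p)) (m : ℕ) (x : Fin n → ℤ) :
    ρ (h ^ m) x - x ∈ LinearMap.range
      ((ρ h : (Fin n → ℤ) →ₗ[ℤ] (Fin n → ℤ)) - LinearMap.id) := by
  induction m with
  | zero => simp
  | succ m ih =>
    have h1 : ρ (h ^ (m + 1)) x = ρ h (ρ (h ^ m) x) := by
      rw [pow_succ', map_mul]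
      rfl
    have key : ρ (h ^ (m + 1)) x - x
        = (((ρ h : (Fin n → ℤ) →ₗ[ℤ] (Fin n → ℤ)) - LinearMap.id :
            (Fin n → ℤ) →ₗ[ℤ] (Fin n → ℤ))) (ρ (h ^ m) x)
          + (ρ (h ^ m) x - x) := by
      rw [h1]
      simp only [LinearMap.sub_apply, LinearMap.id_apply, LinearEquiv.coe_coe]
      abel
    rw [key]
    exact Submodule.add_mem _ (LinearMap.mem_range_self _ _) ih

lemma aux_range_le (g h : Multiplicative (ZMod p)) (hg : g ∈ Submonoid.powers h) :
    LinearMap.range ((ρ g : (Fin n → ℤ) →ₗ[ℤ] (Fin n → ℤ)) - LinearMap.id)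
      ≤ LinearMap.range ((ρ h : (Fin n → ℤ) →ₗ[ℤ] (Fin n → ℤ)) - LinearMap.id) := by
  obtain ⟨m, rfl⟩ := hg
  rintro y ⟨x, rfl⟩
  simpa using aux_pow_mem ρ h m x

end Aux

/-- Let `Γ = ℤⁿ ⋊_ρ ℤ/p` (action free away from `0`) and `s ∈ Γ` of order `p`.
The map sending the class of `u ∈ ℤⁿ` in `coker(ρ(t) − id)` to the conjugacy class of the
cyclic subgroup `⟨u·s⟩` is a bijection onto the set of conjugacy classes of nontrivial
finite subgroups of `Γ`.  This is expressed as: (well-definedness and injectivity) the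
subgroups `⟨u·s⟩` and `⟨v·s⟩` are conjugate iff `u - v ∈ im(ρ(t) − id)`, and
(surjectivity) every nontrivial finite subgroup is conjugate to some `⟨u·s⟩`. -/
theorem stmt6 (p n : ℕ) (hp : p.Prime)
    (ρ : Multiplicative (ZMod p) →* ((Fin n → ℤ) ≃ₗ[ℤ] (Fin n → ℤ)))
    (hfree : ∀ g : Multiplicative (ZMod p), g ≠ 1 →
      ∀ u : Fin n → ℤ, u ≠ 0 → ρ g u ≠ u)
    (t : Multiplicative (ZMod p)) (ht : ∀ g, g ∈ Subgroup.zpowers t)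
    (s : Multiplicative (Fin n → ℤ) ⋊[rhoMulAut ρ] Multiplicative (ZMod p))
    (hs : orderOf s = p) :
    (∀ u v : Fin n → ℤ,
      ((∃ g, Subgroup.map (MulAut.conj g).toMonoidHom
            (Subgroup.zpowers (SemidirectProduct.inl (Multiplicative.ofAdd u) * s))
          = Subgroup.zpowers (SemidirectProduct.inl (Multiplicative.ofAdd v) * s)) ↔
        u - v ∈ LinearMap.range ((ρ t : (Fin n → ℤ) →ₗ[ℤ] (Fin n → ℤ)) - LinearMap.id)))
    ∧ (∀ P : Subgroup (Multiplicative (Fin n → ℤ) ⋊[rhoMulAut ρ] Multiplicative (ZMod p)),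
        P ≠ ⊥ → Finite P →
        ∃ (u : Fin n → ℤ)
          (g : Multiplicative (Fin n → ℤ) ⋊[rhoMulAut ρ] Multiplicative (ZMod p)),
          Subgroup.map (MulAut.conj g).toMonoidHom
            (Subgroup.zpowers (SemidirectProduct.inl (Multiplicative.ofAdd u) * s)) = P) := by
  haveI : Fact p.Prime := ⟨hp⟩
  haveI : NeZero p := ⟨hp.ne_zero⟩
  -- every element of Multiplicative (ZMod p) has p-th power 1
  have hzp : ∀ z : Multiplicative (ZMod p), z ^ p = 1 := by
    intro z
    have h0 : (z ^ p).toAdd = (0 : ZMod p) := by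
      rw [toAdd_pow]
      simp [nsmul_eq_mul]
    calc z ^ p = Multiplicative.ofAdd (z ^ p).toAdd := (ofAdd_toAdd _).symm
      _ = 1 := by rw [h0]; rfl
  -- torsion-freeness of ℤⁿ
  have htf : ∀ (k : ℕ), k ≠ 0 → ∀ x : Multiplicative (Fin n → ℤ), x ^ k = 1 → x = 1 := by
    intro k hk x hxk
    have h1 : k • x.toAdd = 0 := by
      have := congrArg Multiplicative.toAdd hxk
      rwa [toAdd_pow, toAdd_one] at this
    have h3 : x.toAdd = 0 := by
      funext i
      have h2 : (k : ℤ) * x.toAdd i = 0 := by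
        simpa [nsmul_eq_mul] using congrFun h1 i
      rcases mul_eq_zero.1 h2 with h | h
      · exact absurd (by exact_mod_cast h) hk
      · exact h
    calc x = Multiplicative.ofAdd x.toAdd := (ofAdd_toAdd _).symm
      _ = 1 := by rw [h3]; rfl
  -- elements with nontrivial right component have x ^ p = 1
  have hordp : ∀ x : Multiplicative (Fin n → ℤ) ⋊[rhoMulAut ρ] Multiplicative (ZMod p),
      x.right ≠ 1 → x ^ p = 1 := by
    intro x hx
    have hright : (x ^ p).right = 1 := by
      have h1 : (x ^ p).right = x.right ^ p := map_pow SemidirectProduct.rightHom x p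
      rw [h1, hzp]
    have hxp : (x ^ p) = SemidirectProduct.inl (x ^ p).left := by
      conv_lhs => rw [← SemidirectProduct.inl_left_mul_inr_right (x ^ p)]
      rw [hright]
      simp
    have hcomm : x * x ^ p = x ^ p * x := (Commute.self_pow x p).eq
    have hleft : (rhoMulAut ρ) x.right (x ^ p).left = (x ^ p).left := by
      have h1 := congrArg SemidirectProduct.left hcomm
      rw [SemidirectProduct.mul_left, SemidirectProduct.mul_left, hxp] at h1
      simp only [SemidirectProduct.left_inl, SemidirectProduct.right_inl, map_one,
        MulAut.one_apply] at h1
      exact mul_left_cancel (a := x.left) (h1.trans (mul_comm (x ^ p).left x.left))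
    have hzero : ((x ^ p).left).toAdd = 0 := by
      by_contra hne
      exact hfree x.right hx _ hne (by
        simpa [rhoMulAut_apply] using congrArg Multiplicative.toAdd hleft)
    have h2 : (x ^ p).left = 1 := by
      calc (x ^ p).left = Multiplicative.ofAdd ((x ^ p).left).toAdd :=
            (ofAdd_toAdd _).symm
        _ = 1 := by rw [hzero]; rfl
    rw [hxp, h2]
    simp
  have hp2 : 2 ≤ p := hp.two_le
  have hsne : s ≠ 1 := by
    intro h
    rw [h, orderOf_one] at hs
    omega
  have hsp : s ^ p = 1 := by
    have := pow_orderOf_eq_one s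
    rwa [hs] at this
  have hr1 : s.right ≠ 1 := by
    intro h
    have hsl : s = SemidirectProduct.inl s.left := by
      conv_lhs => rw [← SemidirectProduct.inl_left_mul_inr_right s]
      rw [h]
      simp
    rw [hsl, ← map_pow] at hsp
    have h2 : s.left ^ p = 1 :=
      SemidirectProduct.inl_injective (φ := rhoMulAut ρ) (by simpa using hsp)
    exact hsne (hsl.trans (by rw [htf p hp.ne_zero _ h2]; simp))
  -- any nontrivial element of Multiplicative (ZMod p) generates
  have hcardG : Nat.card (Multiplicative (ZMod p)) = p := by
    simp [Nat.card_eq_fintype_card]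
  have hgen : ∀ k : Multiplicative (ZMod p), k ≠ 1 → ∀ g, g ∈ Subgroup.zpowers k := by
    intro k hk g
    have hok : orderOf k = p := by
      have hdvd : orderOf k ∣ p := orderOf_dvd_of_pow_eq_one (hzp k)
      rcases (Nat.Prime.eq_one_or_self_of_dvd hp _ hdvd) with h | h
      · exact absurd (orderOf_eq_one_iff.1 h) hk
      · exact h
    have htop : Subgroup.zpowers k = ⊤ := by
      apply Subgroup.eq_top_of_le_card
      rw [Nat.card_zpowers, hok, hcardG]
    rw [htop]; trivial
  have ht1 : t ≠ 1 := by
    intro h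
    have := ht s.right
    rw [h, Subgroup.zpowers_one_eq_bot, Subgroup.mem_bot] at this
    exact hr1 this
  have hpowers : ∀ (g k : Multiplicative (ZMod p)), (∀ g', g' ∈ Subgroup.zpowers k) →
      g ∈ Submonoid.powers k := fun g k hk => mem_powers_iff_mem_zpowers.2 (hk g)
  -- R equals range for any nontrivial k
  have hRk : ∀ k : Multiplicative (ZMod p), k ≠ 1 →
      LinearMap.range ((ρ k : (Fin n → ℤ) →ₗ[ℤ] (Fin n → ℤ)) - LinearMap.id)
        = LinearMap.range ((ρ t : (Fin n → ℤ) →ₗ[ℤ] (Fin n → ℤ)) - LinearMap.id) := by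
    intro k hk
    exact le_antisymm (aux_range_le ρ k t (hpowers k t ht))
      (aux_range_le ρ t k (hpowers t k (hgen k hk)))
  have hordk : ∀ x : Multiplicative (Fin n → ℤ) ⋊[rhoMulAut ρ] Multiplicative (ZMod p),
      x.right ≠ 1 → orderOf x = p := by
    intro x hx
    have hx1 : x ≠ 1 := fun h => hx (by rw [h]; rfl)
    have hdvd : orderOf x ∣ p := orderOf_dvd_of_pow_eq_one (hordp x hx)
    rcases hp.eq_one_or_self_of_dvd _ hdvd with h | h
    · exact absurd (orderOf_eq_one_iff.1 h) hx1
    · exact h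
  have hordr : orderOf s.right = p := by
    have hdvd : orderOf s.right ∣ p := orderOf_dvd_of_pow_eq_one (hzp s.right)
    rcases hp.eq_one_or_self_of_dvd _ hdvd with h | h
    · exact absurd (orderOf_eq_one_iff.1 h) hr1
    · exact h
  have hleft_mul : ∀ u : Fin n → ℤ,
      ((SemidirectProduct.inl (Multiplicative.ofAdd u) * s :
        Multiplicative (Fin n → ℤ) ⋊[rhoMulAut ρ] Multiplicative (ZMod p))).left.toAdd
        = u + s.left.toAdd := by
    intro u
    rw [SemidirectProduct.mul_left, SemidirectProduct.right_inl, map_one]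
    simp
  have hright_mul : ∀ u : Fin n → ℤ,
      ((SemidirectProduct.inl (Multiplicative.ofAdd u) * s :
        Multiplicative (Fin n → ℤ) ⋊[rhoMulAut ρ] Multiplicative (ZMod p))).right
        = s.right := by
    intro u
    rw [SemidirectProduct.mul_right, SemidirectProduct.right_inl, one_mul]
  have hmem_t : ∀ (h : Multiplicative (ZMod p)) (x : Fin n → ℤ),
      ρ h x - x ∈ LinearMap.range
        ((ρ t : (Fin n → ℤ) →ₗ[ℤ] (Fin n → ℤ)) - LinearMap.id) := by
    intro h x
    obtain ⟨m, hm⟩ := hpowers h t ht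
    rw [← hm]
    exact aux_pow_mem ρ t m x
  constructor
  · intro u v
    constructor
    · rintro ⟨g, hg⟩
      set xu := SemidirectProduct.inl (Multiplicative.ofAdd u) * s with hxu
      set xv := SemidirectProduct.inl (Multiplicative.ofAdd v) * s with hxv
      have hmem : (MulAut.conj g) xu ∈ Subgroup.zpowers xv := by
        rw [← hg]
        exact Subgroup.mem_map_of_mem _ (Subgroup.mem_zpowers xu)
      obtain ⟨m, hm0⟩ := hmem
      have hm : xv ^ m = (MulAut.conj g) xu := hm0
      clear hm0
      have hrconj : ((MulAut.conj g) xu).right = s.right := by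
        have h1 : ((MulAut.conj g) xu).right = g.right * xu.right * g.right⁻¹ := rfl
        rw [h1, mul_inv_cancel_comm, hxu, hright_mul]
      have hrm : s.right ^ m = s.right := by
        have h1 : (xv ^ m).right = xv.right ^ m := map_zpow SemidirectProduct.rightHom xv m
        rw [hm, hrconj, hxv, hright_mul] at h1
        exact h1.symm
      have hdvd : (p : ℤ) ∣ m - 1 := by
        rw [← hordr]
        rw [orderOf_dvd_iff_zpow_eq_one, zpow_sub, zpow_one, hrm, mul_inv_cancel]
      obtain ⟨q, hq⟩ := hdvd
      have hxvr : xv.right = s.right := by rw [hxv, hright_mul]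
      have hxvp : xv ^ (p : ℤ) = 1 := by
        rw [zpow_natCast]
        exact hordp xv (by rw [hxvr]; exact hr1)
      have hxvm : xv ^ m = xv := by
        have hm1 : m = 1 + (p : ℤ) * q := by omega
        rw [hm1, zpow_add, zpow_one, zpow_mul, hxvp, one_zpow, mul_one]
      have hconj : g * xu = xv * g := by
        have h3 : g * xu * g⁻¹ = xv := by
          have h5 : (MulAut.conj g) xu = xv := by rw [← hm, hxvm]
          rw [← h5]; rfl
        rw [← h3]
        group
      have hxul : xu.left.toAdd = u + s.left.toAdd := by rw [hxu]; exact hleft_mul u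
      have hxvl : xv.left.toAdd = v + s.left.toAdd := by rw [hxv]; exact hleft_mul v
      have hleft : g.left * (rhoMulAut ρ) g.right xu.left
          = xv.left * (rhoMulAut ρ) xv.right g.left := congrArg SemidirectProduct.left hconj
      rw [hxvr] at hleft
      have hact : ∀ (k : Multiplicative (ZMod p)) (z : Multiplicative (Fin n → ℤ)),
          ((rhoMulAut ρ) k z).toAdd = ρ k z.toAdd := fun _ _ => rfl
      have h4 : g.left.toAdd + ρ g.right (xu.left.toAdd)
          = xv.left.toAdd + ρ s.right (g.left.toAdd) := by
        have h5 := congrArg Multiplicative.toAdd hleft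
        rw [toAdd_mul, toAdd_mul, hact, hact] at h5
        exact h5
      rw [hxul, hxvl] at h4
      have hadd : g.left.toAdd + ρ g.right (u + s.left.toAdd)
          = (v + s.left.toAdd) + ρ s.right (g.left.toAdd) := h4
      -- hadd : w + ρ h (u + a) = (v + a) + ρ s.right w
      have hm1 : ρ g.right (u + s.left.toAdd) - (u + s.left.toAdd) ∈
          LinearMap.range ((ρ t : (Fin n → ℤ) →ₗ[ℤ] (Fin n → ℤ)) - LinearMap.id) :=
        hmem_t g.right _
      have hm2 : ρ s.right (g.left.toAdd) - g.left.toAdd ∈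
          LinearMap.range ((ρ t : (Fin n → ℤ) →ₗ[ℤ] (Fin n → ℤ)) - LinearMap.id) :=
        hmem_t s.right _
      have key : u - v = (ρ s.right (g.left.toAdd) - g.left.toAdd)
          - (ρ g.right (u + s.left.toAdd) - (u + s.left.toAdd)) := by
        funext i
        have ei := congrFun hadd i
        simp only [Pi.add_apply] at ei
        simp only [Pi.sub_apply, Pi.add_apply]
        linarith
      rw [key]
      exact Submodule.sub_mem _ hm2 hm1
    · intro huv
      have huv' : u - v ∈ LinearMap.range
          ((ρ s.right : (Fin n → ℤ) →ₗ[ℤ] (Fin n → ℤ)) - LinearMap.id) := by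
        rw [hRk s.right hr1]
        exact huv
      obtain ⟨w, hw⟩ := huv'
      refine ⟨SemidirectProduct.inl (Multiplicative.ofAdd w), ?_⟩
      rw [MonoidHom.map_zpowers]
      congr 1
      have hmul : SemidirectProduct.inl (Multiplicative.ofAdd w)
            * (SemidirectProduct.inl (Multiplicative.ofAdd u) * s)
          = (SemidirectProduct.inl (Multiplicative.ofAdd v) * s)
            * SemidirectProduct.inl (Multiplicative.ofAdd w) := by
        have hwsub : ρ s.right w - w = u - v := by
          simpa using hw
        have hadd2 : w + (u + s.left.toAdd) = (v + s.left.toAdd) + ρ s.right w := by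
          funext i
          have hi := congrFun hwsub i
          simp only [Pi.sub_apply] at hi
          simp only [Pi.add_apply]
          linarith
        ext : 1
        · -- left components
          simp only [SemidirectProduct.mul_left, SemidirectProduct.mul_right,
            SemidirectProduct.left_inl, SemidirectProduct.right_inl, map_one,
            MulAut.one_apply, one_mul]
          apply Multiplicative.toAdd.injective
          simp only [toAdd_mul, toAdd_ofAdd]
          have hact : ∀ (k : Multiplicative (ZMod p)) (z : Multiplicative (Fin n → ℤ)),
              ((rhoMulAut ρ) k z).toAdd = ρ k z.toAdd := fun _ _ => rfl
          rw [hact, toAdd_ofAdd]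
          simpa using hadd2
        · -- right components
          simp only [SemidirectProduct.mul_right, SemidirectProduct.right_inl,
            one_mul, mul_one]
      have hc : (MulAut.conj (SemidirectProduct.inl (Multiplicative.ofAdd w))).toMonoidHom
            (SemidirectProduct.inl (Multiplicative.ofAdd u) * s)
          = SemidirectProduct.inl (Multiplicative.ofAdd w)
            * (SemidirectProduct.inl (Multiplicative.ofAdd u) * s)
            * (SemidirectProduct.inl (Multiplicative.ofAdd w))⁻¹ := rfl
      rw [hc, hmul, mul_inv_cancel_right]
  · -- Part 2: surjectivity
    intro P hPbot hPfin
    have hker : ∀ y ∈ P, SemidirectProduct.right y = 1 → y = 1 := by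
      intro y hy hyr
      have hfin : IsOfFinOrder (⟨y, hy⟩ : P) := isOfFinOrder_of_finite _
      obtain ⟨k, hk0, hk⟩ := hfin.exists_pow_eq_one
      have hyk : y ^ k = 1 := by
        have h1 := congrArg (Subtype.val) hk
        simpa using h1
      have hyl : y = SemidirectProduct.inl y.left := by
        conv_lhs => rw [← SemidirectProduct.inl_left_mul_inr_right y]
        rw [hyr]
        simp
      rw [hyl, ← map_pow] at hyk
      have h2 : y.left ^ k = 1 :=
        SemidirectProduct.inl_injective (φ := rhoMulAut ρ) (by simpa using hyk)
      rw [hyl, htf k hk0.ne' _ h2]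
      simp
    obtain ⟨x, hxP, hx1⟩ := (Subgroup.bot_or_exists_ne_one P).resolve_left hPbot
    have hxr : x.right ≠ 1 := fun h => hx1 (hker x hxP h)
    have hordx : orderOf x = p := hordk x hxr
    obtain ⟨j, hj⟩ := hgen x.right hxr s.right
    set y := x ^ j with hy
    have hyP : y ∈ P := Subgroup.zpow_mem P hxP j
    have hyr : y.right = s.right := by
      have hj2 : x.right ^ j = s.right := hj
      have h1 : (x ^ j).right = x.right ^ j := map_zpow SemidirectProduct.rightHom x j
      rw [hy, h1, hj2]
    have hyr1 : y.right ≠ 1 := by rw [hyr]; exact hr1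
    have hordy : orderOf y = p := hordk y hyr1
    have hfinx : IsOfFinOrder x := isOfFinOrder_iff_pow_eq_one.2 ⟨p, hp.pos, hordp x hxr⟩
    haveI : Finite (Subgroup.zpowers x) := hfinx.finite_zpowers.to_subtype
    have hzyx : Subgroup.zpowers y ≤ Subgroup.zpowers x :=
      Subgroup.zpowers_le.2 (Subgroup.zpow_mem _ (Subgroup.mem_zpowers x) j)
    have hyx : Subgroup.zpowers y = Subgroup.zpowers x := by
      apply Subgroup.eq_of_le_of_card_ge hzyx
      rw [Nat.card_zpowers, Nat.card_zpowers, hordx, hordy]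
    have hcardP : Nat.card P ≤ p := by
      have hinj : Function.Injective
          (fun z : P => SemidirectProduct.right (z : Multiplicative (Fin n → ℤ)
            ⋊[rhoMulAut ρ] Multiplicative (ZMod p))) := by
        intro z1 z2 h12
        have h0 : SemidirectProduct.right ((z1 * z2⁻¹ : P) : Multiplicative (Fin n → ℤ)
            ⋊[rhoMulAut ρ] Multiplicative (ZMod p)) = 1 := by
          have : ((z1 * z2⁻¹ : P) : Multiplicative (Fin n → ℤ)
              ⋊[rhoMulAut ρ] Multiplicative (ZMod p))
              = (z1 : Multiplicative (Fin n → ℤ) ⋊[rhoMulAut ρ] Multiplicative (ZMod p))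
                * (z2 : Multiplicative (Fin n → ℤ) ⋊[rhoMulAut ρ] Multiplicative (ZMod p))⁻¹ :=
            rfl
          have h13 : (z1 : Multiplicative (Fin n → ℤ)
              ⋊[rhoMulAut ρ] Multiplicative (ZMod p)).right
              = (z2 : Multiplicative (Fin n → ℤ)
              ⋊[rhoMulAut ρ] Multiplicative (ZMod p)).right := h12
          rw [this, SemidirectProduct.mul_right, SemidirectProduct.inv_right, h13]
          simp
        have h1 : ((z1 * z2⁻¹ : P) : Multiplicative (Fin n → ℤ)
            ⋊[rhoMulAut ρ] Multiplicative (ZMod p)) = 1 := hker _ (z1 * z2⁻¹).2 h0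
        have h2 : (z1 * z2⁻¹ : P) = 1 := Subtype.ext h1
        have h3 : z1 = z2 := by
          rwa [mul_inv_eq_one] at h2
        exact h3
      calc Nat.card P ≤ Nat.card (Multiplicative (ZMod p)) :=
            Nat.card_le_card_of_injective _ hinj
        _ = p := hcardG
    have hPz : Subgroup.zpowers x = P := by
      apply Subgroup.eq_of_le_of_card_ge (Subgroup.zpowers_le.2 hxP)
      rw [Nat.card_zpowers, hordx]
      exact hcardP
    refine ⟨y.left.toAdd - s.left.toAdd, 1, ?_⟩
    have hgy : SemidirectProduct.inl (Multiplicative.ofAdd (y.left.toAdd - s.left.toAdd)) * s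
        = y := by
      ext : 1
      · simp only [SemidirectProduct.mul_left, SemidirectProduct.right_inl, map_one,
          SemidirectProduct.left_inl, MulAut.one_apply]
        apply Multiplicative.toAdd.injective
        simp only [toAdd_mul, toAdd_ofAdd]
        abel
      · simp only [SemidirectProduct.mul_right, SemidirectProduct.right_inl, one_mul]
        exact hyr.symm
    rw [MonoidHom.map_zpowers]
    have hc1 : (MulAut.conj (1 : Multiplicative (Fin n → ℤ)
          ⋊[rhoMulAut ρ] Multiplicative (ZMod p))).toMonoidHom
          (SemidirectProduct.inl (Multiplicative.ofAdd (y.left.toAdd - s.left.toAdd)) * s)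
        = SemidirectProduct.inl (Multiplicative.ofAdd (y.left.toAdd - s.left.toAdd)) * s := by
      simp
    rw [hc1, hgy, hyx, hPz]
end

section
/- Let p be an odd prime. Then for 1 ≤ l ≤ p−1, the l-th exterior power Λ^l(ℤ[ℤ/p]) of the group ring ℤ[ℤ/p] (over ℤ), with the ℤ/p-action induced by left multiplication, is a free ℤ[ℤ/p]-module. -/
open ExteriorAlgebra in
/-- The functorial map induced on `n`-th exterior powers by a linear map. -/
noncomputable def extPowerMap {R M N : Type*} [CommRing R] [AddCommGroup M] [Module R M]
    [AddCommGroup N] [Module R N] (n : ℕ) (f : M →ₗ[R] N) :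
    ⋀[R]^n M →ₗ[R] ⋀[R]^n N :=
  (ExteriorAlgebra.map f).toLinearMap.restrict (p := ⋀[R]^n M) (q := ⋀[R]^n N)
    (fun x hx => by
      have h1 : Submodule.map (ExteriorAlgebra.map f).toLinearMap (⋀[R]^n M) ≤ ⋀[R]^n N := by
        rw [exteriorPower, exteriorPower, Submodule.map_pow, ExteriorAlgebra.ι_range_map_map]
        exact pow_le_pow_left' (by rintro y ⟨z, hz, rfl⟩; exact ⟨z, rfl⟩) n
      exact h1 ⟨x, hx, rfl⟩)


open ExteriorAlgebra Module
section ExtBasis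
variable {I : Type*} [LinearOrder I] [Fintype I] {M : Type*} [AddCommGroup M] [Module ℤ M]
set_option linter.unusedSectionVars false
set_option maxHeartbeats 1000000


noncomputable def wfam (b : Basis I ℤ M) (n : ℕ) (s : {s : Finset I // s.card = n}) :
    ⋀[ℤ]^n M :=
  ⟨ιMulti_family ℤ n b s, ιMulti_range ℤ n (Set.mem_range_self _)⟩

lemma wfam_val (b : Basis I ℤ M) (n : ℕ) (s) :
    (wfam b n s : ExteriorAlgebra ℤ M) = ιMulti_family ℤ n b s := rfl

lemma iMulti_inj (b : Basis I ℤ M) (n : ℕ) (u : Fin n → I) (hu : Function.Injective u) :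
    ∃ ε : ℤˣ, ιMulti ℤ n (b ∘ u) =
      (ε : ℤ) • ιMulti_family ℤ n b ⟨Finset.univ.image u, by
        rw [Set.powersetCard.mem_iff, Finset.card_image_of_injective _ hu, Finset.card_univ, Fintype.card_fin]⟩ := by
  set S : Finset I := Finset.univ.image u with hS
  have hcard : S.card = n := by
    rw [hS, Finset.card_image_of_injective _ hu, Finset.card_univ, Fintype.card_fin]
  set o := S.orderIsoOfFin hcard with ho
  have hrange : Set.range u = ↑S := by
    rw [hS, Finset.coe_image, Finset.coe_univ, Set.image_univ]
  let e1 : Fin n ≃ S := (Equiv.ofInjective u hu).trans (Equiv.setCongr hrange)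
  let σ : Equiv.Perm (Fin n) := e1.trans o.toEquiv.symm
  have key : (fun i => b ((o i : I))) ∘ σ = b ∘ u := by
    funext i
    have h1 : o (σ i) = e1 i := o.apply_symm_apply (e1 i)
    show b ((o (σ i) : I)) = b (u i)
    rw [h1]
    rfl
  refine ⟨Equiv.Perm.sign σ, ?_⟩
  have hperm := AlternatingMap.map_perm (ιMulti ℤ n (M := M)) (fun i => b ((o i : I))) σ
  rw [key] at hperm
  have hfam : ιMulti_family ℤ n b ⟨S, hcard⟩ = ιMulti ℤ n fun i => b ((o i : I)) := by
    rfl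
  rw [hperm, hfam]
  rcases Int.units_eq_one_or (Equiv.Perm.sign σ) with h | h <;> rw [h] <;> simp

lemma span_iMulti_family (b : Basis I ℤ M) (n : ℕ) :
    Submodule.span ℤ (Set.range (ιMulti_family ℤ n b)) = ⋀[ℤ]^n M := by
  letI : SMul ℤ M := (‹Module ℤ M›).toSMul
  refine le_antisymm (Submodule.span_le.2 ?_) ?_
  · rintro x ⟨s, rfl⟩
    exact ιMulti_range ℤ n (Set.mem_range_self _)
  · refine le_trans (ιMulti_span_fixedDegree (R := ℤ) (M := M) n).ge (Submodule.span_le.2 ?_)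
    rintro x ⟨v, rfl⟩
    have expand : (ιMulti ℤ n (M := M)).toMultilinearMap v =
        ∑ r ∈ Fintype.piFinset (fun _ : Fin n => (Finset.univ : Finset I)),
          (ιMulti ℤ n (M := M)).toMultilinearMap (fun i => b.repr (v i) (r i) • b (r i)) := by
      calc (ιMulti ℤ n (M := M)).toMultilinearMap v
          = (ιMulti ℤ n (M := M)).toMultilinearMap
              (fun i => ∑ g : I, b.repr (v i) g • b g) := by
            congr 1; funext i; exact (Basis.sum_repr b (v i)).symm
        _ = _ := MultilinearMap.map_sum_finset (ιMulti ℤ n (M := M)).toMultilinearMap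
              (fun i g => b.repr (v i) g • b g) (fun _ => Finset.univ)
    have expand' : ιMulti ℤ n v =
        ∑ r ∈ Fintype.piFinset (fun _ : Fin n => (Finset.univ : Finset I)),
          ιMulti ℤ n (fun i => b.repr (v i) (r i) • b (r i)) := expand
    rw [expand']
    refine Submodule.sum_mem _ fun r _ => ?_
    have hsmul : (ιMulti ℤ n (M := M)).toMultilinearMap (fun i => b.repr (v i) (r i) • b (r i)) =
        (∏ i, b.repr (v i) (r i)) • (ιMulti ℤ n (M := M)).toMultilinearMap (b ∘ r) :=
      MultilinearMap.map_smul_univ (ιMulti ℤ n (M := M)).toMultilinearMap _ _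
    have hsmul' : ιMulti ℤ n (fun i => b.repr (v i) (r i) • b (r i)) =
        (∏ i, b.repr (v i) (r i)) • ιMulti ℤ n (b ∘ r) := hsmul
    rw [hsmul']
    refine Submodule.smul_mem _ _ ?_
    by_cases hr : Function.Injective r
    · obtain ⟨ε, hε⟩ := iMulti_inj b n r hr
      rw [hε]
      exact Submodule.smul_mem _ _ (Submodule.subset_span (Set.mem_range_self _))
    · rw [Function.not_injective_iff] at hr
      obtain ⟨i, j, hij, hne⟩ := hr
      have hz : ιMulti ℤ n (b ∘ r) = 0 :=
        AlternatingMap.map_eq_zero_of_eq _ (b ∘ r) (by simp [Function.comp, hij]) hne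
      rw [hz]
      exact Submodule.zero_mem _

noncomputable def coordMap (b : Basis I ℤ M) (n : ℕ) (T : {s : Finset I // s.card = n}) :
    M →ₗ[ℤ] (Fin n → ℤ) :=
  LinearMap.pi fun i =>
    (Finsupp.lapply ((T.1.orderIsoOfFin T.2 i : I))) ∘ₗ (b.repr : M →ₗ[ℤ] (I →₀ ℤ))

noncomputable def phiFun (b : Basis I ℤ M) (n : ℕ) (T : {s : Finset I // s.card = n}) :
    ExteriorAlgebra ℤ M →ₗ[ℤ] ℤ :=
  liftAlternating (Function.update 0 n
    ((Matrix.detRowAlternating (R := ℤ) (n := Fin n)).compLinearMap (coordMap b n T)))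

lemma phiFun_apply_family (b : Basis I ℤ M) (n : ℕ) (S T : {s : Finset I // s.card = n}) :
    phiFun b n T (ιMulti_family ℤ n b S) = if S = T then 1 else 0 := by
  show phiFun b n T (ιMulti ℤ n (fun i => b (S.1.orderIsoOfFin S.2 i : I))) = _
  refine (liftAlternating_apply_ιMulti _ _).trans ?_
  rw [Function.update_self]
  rw [AlternatingMap.compLinearMap_apply]
  have hmat : (fun i => coordMap b n T (b ((S.1.orderIsoOfFin S.2 i : I)))) =
      fun i j => if (S.1.orderIsoOfFin S.2 i : I) = (T.1.orderIsoOfFin T.2 j : I)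
        then (1:ℤ) else 0 := by
    funext i j
    simp [coordMap, Finsupp.single_apply]
    exact if_congr Iff.rfl rfl rfl
  rw [hmat]
  by_cases hST : S = T
  · subst hST
    rw [if_pos rfl]
    have : (fun i j => if (S.1.orderIsoOfFin S.2 i : I) = (S.1.orderIsoOfFin S.2 j : I)
        then (1:ℤ) else 0) = (1 : Matrix (Fin n) (Fin n) ℤ) := by
      funext i j
      rw [Matrix.one_apply]
      congr 1
      simp only [eq_iff_iff]
      constructor
      · intro h
        exact (S.1.orderIsoOfFin S.2).injective (Subtype.ext h)
      · rintro rfl; rfl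
    show (Matrix.of fun i j => if ((S.1.orderIsoOfFin S.2 i : I)) = ((S.1.orderIsoOfFin S.2 j : I)) then (1:ℤ) else 0).det = 1
    rw [show (Matrix.of fun i j => if ((S.1.orderIsoOfFin S.2 i : I)) = ((S.1.orderIsoOfFin S.2 j : I)) then (1:ℤ) else 0) = (1 : Matrix (Fin n) (Fin n) ℤ) from this, Matrix.det_one]
  · rw [if_neg hST]
    show (Matrix.of fun i j => if ((S.1.orderIsoOfFin S.2 i : I)) = ((T.1.orderIsoOfFin T.2 j : I)) then (1:ℤ) else 0).det = 0
    have hsub : ¬ S.1 ⊆ T.1 := by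
      intro hsubset
      exact hST (Subtype.ext (Finset.eq_of_subset_of_card_le hsubset (by rw [S.2, T.2])))
    obtain ⟨x, hxS, hxT⟩ := Finset.not_subset.1 hsub
    set i0 : Fin n := (S.1.orderIsoOfFin S.2).symm ⟨x, hxS⟩ with hi0
    refine Matrix.det_eq_zero_of_row_eq_zero i0 fun j => ?_
    have hx : ((S.1.orderIsoOfFin S.2 i0 : I)) = x := by
      rw [hi0, OrderIso.apply_symm_apply]
    simp only [Matrix.of_apply, hx]
    rw [if_neg]
    intro h
    exact hxT (h ▸ (T.1.orderIsoOfFin T.2 j).2)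

lemma wfam_linearIndependent (b : Basis I ℤ M) (n : ℕ) :
    LinearIndependent ℤ (wfam b n) := by
  rw [linearIndependent_iff']
  intro s g hsum T hT
  set L : (⋀[ℤ]^n M) →ₗ[ℤ] ℤ :=
    ((phiFun b n T).toAddMonoidHom.comp (⋀[ℤ]^n M).subtype.toAddMonoidHom).toIntLinearMap with hL
  have hLw : ∀ i, L (wfam b n i) = phiFun b n T (ιMulti_family ℤ n b i) := fun i => rfl
  have h0 : L (∑ i ∈ s, g i • wfam b n i) = 0 := by rw [hsum, map_zero]
  rw [map_sum] at h0
  simp only [map_smul, hLw,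
    phiFun_apply_family, smul_eq_mul, mul_ite, mul_one, mul_zero] at h0
  rw [Finset.sum_ite_eq' s T g] at h0
  rwa [if_pos hT] at h0

lemma wfam_span_top (b : Basis I ℤ M) (n : ℕ) :
    ⊤ ≤ Submodule.span ℤ (Set.range (wfam b n)) := by
  rintro ⟨x, hx⟩ -
  have hx' : x ∈ Submodule.span ℤ (Set.range (ιMulti_family ℤ n b)) :=
    (span_iMulti_family b n).ge hx
  induction hx' using Submodule.span_induction with
  | mem y hy =>
    obtain ⟨s, rfl⟩ := hy
    exact Submodule.subset_span ⟨s, rfl⟩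
  | zero => exact Submodule.zero_mem _
  | add y z hy hz ihy ihz =>
    exact Submodule.add_mem _ (ihy ((span_iMulti_family b n).le hy))
      (ihz ((span_iMulti_family b n).le hz))
  | smul a y hy ih => exact Submodule.smul_mem _ a (ih ((span_iMulti_family b n).le hy))

noncomputable def wBasis (b : Basis I ℤ M) (n : ℕ) :
    Basis {s : Finset I // s.card = n} ℤ (⋀[ℤ]^n M) :=
  Basis.mk (wfam_linearIndependent b n) (wfam_span_top b n)

lemma wBasis_apply (b : Basis I ℤ M) (n : ℕ) (s) : wBasis b n s = wfam b n s :=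
  Basis.mk_apply _ _ _

end ExtBasis

section GroupPart

variable (p l : ℕ)

/-- a linear order on `Multiplicative (ZMod p)` -/
noncomputable def mlo [NeZero p] : LinearOrder (Multiplicative (ZMod p)) :=
  LinearOrder.lift' (fun g => (Multiplicative.toAdd g).val)
    (fun a b h => Multiplicative.toAdd.injective (ZMod.val_injective p h))

attribute [local instance] mlo

/-- the action of the group on `l`-element subsets -/
def actI [NeZero p] (g : Multiplicative (ZMod p))
    (S : {s : Finset (Multiplicative (ZMod p)) // s.card = l}) :
    {s : Finset (Multiplicative (ZMod p)) // s.card = l} :=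
  ⟨S.1.image (g * ·), by rw [Finset.card_image_of_injective _ (mul_right_injective g), S.2]⟩

lemma mem_actI [NeZero p] (g a : Multiplicative (ZMod p))
    (S : {s : Finset (Multiplicative (ZMod p)) // s.card = l}) :
    a ∈ (actI p l g S).1 ↔ ∃ s ∈ S.1, g * s = a := by
  show a ∈ S.1.image (g * ·) ↔ _
  rw [Finset.mem_image]

lemma actI_one [NeZero p] (S) : actI p l 1 S = S := by
  apply Subtype.ext
  show S.1.image (1 * ·) = S.1
  simp

lemma actI_mul [NeZero p] (g h : Multiplicative (ZMod p)) (S) :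
    actI p l g (actI p l h S) = actI p l (g * h) S := by
  apply Subtype.ext
  show (S.1.image (h * ·)).image (g * ·) = S.1.image ((g * h) * ·)
  rw [Finset.image_image]
  congr 1
  funext x
  show g * (h * x) = (g * h) * x
  rw [mul_assoc]

lemma actI_free [NeZero p] (hp : p.Prime) (hl1 : 1 ≤ l) (hl2 : l ≤ p - 1)
    (g : Multiplicative (ZMod p)) (S : {s : Finset (Multiplicative (ZMod p)) // s.card = l})
    (hfix : actI p l g S = S) : g = 1 := by
  haveI : Fact p.Prime := ⟨hp⟩
  by_contra hg
  -- every group power translate of an element of S stays in S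
  have step : ∀ s ∈ S.1, g * s ∈ S.1 := by
    intro s hs
    have : g * s ∈ S.1.image (g * ·) := Finset.mem_image_of_mem _ hs
    rwa [show S.1.image (g * ·) = S.1 from congrArg Subtype.val hfix] at this
  have pow_step : ∀ k : ℕ, ∀ s ∈ S.1, g ^ k * s ∈ S.1 := by
    intro k
    induction k with
    | zero => intro s hs; simpa using hs
    | succ k ih =>
      intro s hs
      have h1 : g ^ (k + 1) * s = g * (g ^ k * s) := by rw [pow_succ', mul_assoc]
      rw [h1]
      exact step _ (ih s hs)
  have hne : S.1.Nonempty := Finset.card_pos.1 (by rw [S.2]; omega)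
  obtain ⟨s₀, hs₀⟩ := hne
  have ha : Multiplicative.toAdd g ≠ 0 := by
    intro h
    exact hg (Multiplicative.toAdd.injective (by simpa using h))
  set a : ZMod p := Multiplicative.toAdd g with hadef
  have huniv : ∀ t : Multiplicative (ZMod p), t ∈ S.1 := by
    intro t
    set x : ZMod p := (Multiplicative.toAdd t - Multiplicative.toAdd s₀) * a⁻¹ with hx
    have key : g ^ x.val * s₀ = t := by
      apply Multiplicative.toAdd.injective
      rw [toAdd_mul, toAdd_pow]
      have h1 : (x.val : ZMod p) = x := ZMod.natCast_rightInverse x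
      have h2 : x.val • a = (x.val : ZMod p) * a := by rw [nsmul_eq_mul]
      rw [h2, h1, hx, mul_assoc, inv_mul_cancel₀ ha, mul_one, sub_add_cancel]
    rw [← key]
    exact pow_step _ _ hs₀
  have hSuniv : S.1 = Finset.univ := Finset.eq_univ_iff_forall.2 huniv
  have hcardG : Fintype.card (Multiplicative (ZMod p)) = p := by
    rw [Fintype.card_congr Multiplicative.toAdd, ZMod.card]
  have : l = p := by rw [← S.2, hSuniv, Finset.card_univ, hcardG]
  omega

end GroupPart

section GroupPart2
open ExteriorAlgebra
variable (p l : ℕ)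
attribute [local instance] mlo

noncomputable def bG (p : ℕ) : Basis (Multiplicative (ZMod p)) ℤ
    (MonoidAlgebra ℤ (Multiplicative (ZMod p))) :=
  MonoidAlgebra.basis _ ℤ

example [NeZero p] (h : Multiplicative (ZMod p)) :
    bG p h = MonoidAlgebra.single h (1 : ℤ) := rfl

lemma act_on_wfam [NeZero p] (g : Multiplicative (ZMod p))
    (S : {s : Finset (Multiplicative (ZMod p)) // s.card = l}) :
    ∃ ε : ℤˣ,
      extPowerMap l (LinearMap.mulLeft ℤ (MonoidAlgebra.single g (1 : ℤ))) (wfam (bG p) l S)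
        = (ε : ℤ) • wfam (bG p) l (actI p l g S) := by
  set f := LinearMap.mulLeft ℤ (MonoidAlgebra.single g (1 : ℤ)) with hf
  set u : Fin l → Multiplicative (ZMod p) := fun i => g * (S.1.orderIsoOfFin S.2 i : Multiplicative (ZMod p)) with hu
  have huinj : Function.Injective u := by
    intro i j h
    exact (S.1.orderIsoOfFin S.2).injective
      (Subtype.ext (mul_right_injective g h))
  obtain ⟨ε, hε⟩ := iMulti_inj (bG p) l u huinj
  refine ⟨ε, Subtype.ext ?_⟩
  have hval : ((extPowerMap l f (wfam (bG p) l S)) : ExteriorAlgebra ℤ (MonoidAlgebra ℤ (Multiplicative (ZMod p))))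
      = ExteriorAlgebra.map f (ιMulti_family ℤ l (bG p) S) := rfl
  rw [hval]
  have h1 : ExteriorAlgebra.map f (ιMulti_family ℤ l (bG p) S)
      = ιMulti ℤ l (f ∘ fun i => bG p ((S.1.orderIsoOfFin S.2 i : Multiplicative (ZMod p)))) := by
    show ExteriorAlgebra.map f (ιMulti ℤ l (fun i => bG p (S.1.orderIsoOfFin S.2 i : Multiplicative (ZMod p)))) = _
    rw [map_apply_ιMulti]
  have h2 : (f ∘ fun i => bG p ((S.1.orderIsoOfFin S.2 i : Multiplicative (ZMod p)))) = (bG p) ∘ u := by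
    funext i
    show f (bG p ((S.1.orderIsoOfFin S.2 i : Multiplicative (ZMod p)))) = bG p (u i)
    have hb : ∀ h : Multiplicative (ZMod p), bG p h = MonoidAlgebra.single h (1 : ℤ) := fun h => rfl
    rw [hb, hb, hf, LinearMap.mulLeft_apply, MonoidAlgebra.single_mul_single, one_mul, hu]
  refine hval.trans ?_
  rw [h1, h2, hε]
  have h4 : ((((ε : ℤ) • wfam (bG p) l (actI p l g S)) :
        ⋀[ℤ]^l (MonoidAlgebra ℤ (Multiplicative (ZMod p)))) :
        ExteriorAlgebra ℤ (MonoidAlgebra ℤ (Multiplicative (ZMod p))))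
      = (ε : ℤ) • ιMulti_family ℤ l (bG p) (actI p l g S) := rfl
  rw [h4]
  congr 1
  refine congrArg _ ?_
  apply Subtype.ext
  apply Finset.ext
  intro a
  simp only [Finset.mem_image, mem_actI]
  constructor
  · rintro ⟨i, _, rfl⟩
    exact ⟨_, (S.1.orderIsoOfFin S.2 i).2, rfl⟩
  · rintro ⟨s, hs, rfl⟩
    refine ⟨(S.1.orderIsoOfFin S.2).symm ⟨s, hs⟩, Finset.mem_univ _, ?_⟩
    show g * ((S.1.orderIsoOfFin S.2) ((S.1.orderIsoOfFin S.2).symm ⟨s, hs⟩) : Multiplicative (ZMod p)) = g * s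
    congr 1
    exact congrArg Subtype.val ((S.1.orderIsoOfFin S.2).apply_symm_apply ⟨s, hs⟩)

end GroupPart2


set_option maxHeartbeats 1600000 in
/-- For an odd prime `p` and `1 ≤ l ≤ p-1`, the `l`-th exterior power (over
`ℤ`) of the group ring `ℤ[ℤ/p]`, with the diagonal `ℤ/p`-action induced by left
multiplication, is a free `ℤ[ℤ/p]`-module; i.e. it is `ℤ/p`-equivariantly isomorphic to a
finite direct sum of copies of `ℤ[ℤ/p]` with the left-multiplication action. -/
theorem stmt7 (p l : ℕ) (hp : p.Prime) (hodd : Odd p) (hl1 : 1 ≤ l) (hl2 : l ≤ p - 1) :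
    ∃ (c : ℕ)
      (e : (⋀[ℤ]^l (MonoidAlgebra ℤ (Multiplicative (ZMod p)))) ≃ₗ[ℤ]
        (Fin c → MonoidAlgebra ℤ (Multiplicative (ZMod p)))),
      ∀ (g : Multiplicative (ZMod p)) (x : ⋀[ℤ]^l (MonoidAlgebra ℤ (Multiplicative (ZMod p)))),
        e (extPowerMap l (LinearMap.mulLeft ℤ (MonoidAlgebra.single g (1 : ℤ))) x)
          = fun i => MonoidAlgebra.single g (1 : ℤ) * e x i := by
  haveI : NeZero p := ⟨hp.ne_zero⟩
  letI := mlo p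
  letI sd : Setoid {s : Finset (Multiplicative (ZMod p)) // s.card = l} :=
    ⟨fun S T => ∃ g, actI p l g S = T,
      ⟨fun S => ⟨1, actI_one p l S⟩,
       fun {S T} h => by
         obtain ⟨g, hg⟩ := h
         exact ⟨g⁻¹, by rw [← hg, actI_mul, inv_mul_cancel, actI_one]⟩,
       fun {S T U} h1 h2 => by
         obtain ⟨g, hg⟩ := h1
         obtain ⟨h, hh⟩ := h2
         exact ⟨h * g, by rw [← actI_mul, hg, hh]⟩⟩⟩
  letI : DecidableRel (fun (a b : {s : Finset (Multiplicative (ZMod p)) // s.card = l}) => a ≈ b) :=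
    fun S T => inferInstanceAs (Decidable (∃ g, actI p l g S = T))
  haveI : Fintype (Quotient sd) := Quotient.fintype sd
  set c := Fintype.card (Quotient sd) with hc
  let eQ : Quotient sd ≃ Fin c := Fintype.equivFin _
  let bij : Fin c × Multiplicative (ZMod p) → {s : Finset (Multiplicative (ZMod p)) // s.card = l} :=
    fun x => actI p l x.2 (eQ.symm x.1).out
  have hbij : Function.Bijective bij := by
    constructor
    · intro x y h
      have h' : actI p l x.2 (eQ.symm x.1).out = actI p l y.2 (eQ.symm y.1).out := h
      have hrel : (eQ.symm x.1).out ≈ (eQ.symm y.1).out :=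
        ⟨y.2⁻¹ * x.2, by
          show actI p l (y.2⁻¹ * x.2) (eQ.symm x.1).out = (eQ.symm y.1).out
          rw [← actI_mul, h']
          show actI p l y.2⁻¹ (actI p l y.2 _) = _
          rw [actI_mul, inv_mul_cancel, actI_one]⟩
      have h1 : x.1 = y.1 := by
        have := Quotient.sound hrel
        rw [Quotient.out_eq, Quotient.out_eq] at this
        exact eQ.symm.injective this
      have h2 : x.2 = y.2 := by
        have hS : actI p l x.2 (eQ.symm x.1).out = actI p l y.2 (eQ.symm x.1).out := by
          have := h'; rw [← h1] at this; exact this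
        have : actI p l (y.2⁻¹ * x.2) (eQ.symm x.1).out = (eQ.symm x.1).out := by
          rw [← actI_mul, hS, actI_mul, inv_mul_cancel, actI_one]
        have hone := actI_free p l hp hl1 hl2 _ _ this
        have : x.2 = y.2 * (y.2⁻¹ * x.2) := by rw [← mul_assoc, mul_inv_cancel, one_mul]
        rw [this, hone, mul_one]
      exact Prod.ext h1 h2
    · intro S
      obtain ⟨g, hg⟩ := Quotient.mk_out (s := sd) S
      refine ⟨(eQ ⟦S⟧, g), ?_⟩
      show actI p l g (eQ.symm (eQ ⟦S⟧)).out = S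
      rw [eQ.symm_apply_apply]
      exact hg
  let bijE := Equiv.ofBijective bij hbij
  have hsign : ∀ (x : Fin c × Multiplicative (ZMod p)), ∃ ε : ℤˣ,
      extPowerMap l (LinearMap.mulLeft ℤ (MonoidAlgebra.single x.2 (1 : ℤ)))
        (wfam (bG p) l (eQ.symm x.1).out) = (ε : ℤ) • wfam (bG p) l (bijE x) :=
    fun x => act_on_wfam p l x.2 _
  choose εf hεf using hsign
  let B := wBasis (bG p) l
  let v : Basis (Fin c × Multiplicative (ZMod p)) ℤ
      (⋀[ℤ]^l (MonoidAlgebra ℤ (Multiplicative (ZMod p)))) := (B.reindex bijE.symm).unitsSMul εf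
  have hv : ∀ x, v x =
      extPowerMap l (LinearMap.mulLeft ℤ (MonoidAlgebra.single x.2 (1 : ℤ)))
        (wfam (bG p) l (eQ.symm x.1).out) := by
    intro x
    show (B.reindex bijE.symm).unitsSMul εf x = _
    rw [Basis.unitsSMul_apply, Basis.reindex_apply, Equiv.symm_symm]
    rw [show B (bijE x) = wfam (bG p) l (bijE x) from wBasis_apply _ _ _]
    rw [hεf x]
    rw [Units.smul_def]
  let uB : Basis (Fin c × Multiplicative (ZMod p)) ℤ
      (Fin c → MonoidAlgebra ℤ (Multiplicative (ZMod p))) :=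
    (Pi.basis fun _ => bG p).reindex (Equiv.sigmaEquivProd _ _)
  have huB : ∀ x : Fin c × Multiplicative (ZMod p),
      uB x = Pi.single x.1 (MonoidAlgebra.single x.2 (1 : ℤ)) := by
    intro x
    rw [show uB x = (Pi.basis fun _ => bG p) ((Equiv.sigmaEquivProd _ _).symm x)
      from Basis.reindex_apply _ _ x]
    rw [show (Equiv.sigmaEquivProd (Fin c) (Multiplicative (ZMod p))).symm x
      = ⟨x.1, x.2⟩ from rfl]
    rw [Pi.basis_apply]
    rfl
  let e := v.equiv uB (Equiv.refl _)
  refine ⟨c, e, ?_⟩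
  intro g x
  have comp : ∀ (a b : MonoidAlgebra ℤ (Multiplicative (ZMod p)))
      (y : ⋀[ℤ]^l (MonoidAlgebra ℤ (Multiplicative (ZMod p)))),
      extPowerMap l (LinearMap.mulLeft ℤ a) (extPowerMap l (LinearMap.mulLeft ℤ b) y) =
      extPowerMap l (LinearMap.mulLeft ℤ (a * b)) y := by
    intro a b y
    apply Subtype.ext
    show ExteriorAlgebra.map (LinearMap.mulLeft ℤ a) (ExteriorAlgebra.map (LinearMap.mulLeft ℤ b) y.1)
      = ExteriorAlgebra.map (LinearMap.mulLeft ℤ (a * b)) y.1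
    rw [LinearMap.mulLeft_mul, ← ExteriorAlgebra.map_comp_map, AlgHom.comp_apply]
  have main : (e.toLinearMap.comp
        (extPowerMap l (LinearMap.mulLeft ℤ (MonoidAlgebra.single g (1 : ℤ))))) =
      (LinearMap.pi fun i => (LinearMap.mulLeft ℤ (MonoidAlgebra.single g (1 : ℤ))).comp
        (LinearMap.proj i)).comp e.toLinearMap := by
    apply Basis.ext v
    intro y
    simp only [LinearMap.comp_apply, LinearEquiv.coe_coe]
    have lhs1 : extPowerMap l (LinearMap.mulLeft ℤ (MonoidAlgebra.single g (1 : ℤ))) (v y)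
        = v (y.1, g * y.2) := by
      rw [hv y, comp, MonoidAlgebra.single_mul_single, one_mul]
      exact (hv (y.1, g * y.2)).symm
    rw [lhs1]
    have he : ∀ z, e (v z) = uB z := fun z => v.equiv_apply z uB (Equiv.refl _)
    rw [he, he]
    rw [huB, huB]
    funext i
    simp only [LinearMap.pi_apply, LinearMap.comp_apply, LinearMap.proj_apply,
      LinearMap.mulLeft_apply]
    by_cases hi : i = y.1
    · subst hi
      rw [Pi.single_eq_same, Pi.single_eq_same, MonoidAlgebra.single_mul_single, one_mul]
    · rw [Pi.single_eq_of_ne hi, Pi.single_eq_of_ne hi, mul_zero]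
  have := LinearMap.congr_fun main x
  exact this
end
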